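/- Let ν > 0, η > 0, M ≥ 0, let s ∈ ℂ with Re s > η, and let g : [0,∞) → ℂ be continuous with |g(τ)| ≤ M e^{−ητ} for all τ ≥ 0. Define w(y) = −(1/(2νs)) ∫_0^∞ g(τ) e^{−s|τ−y|} dτ − (1/(2νs)) ∫_0^∞ g(τ) e^{−s(τ+y)} dτ. Then w is twice continuously differentiable on [0,∞), satisfies ν (w''(y) − s² w(y)) = g(y) for all y ≥ 0, and for all y ≥ 0 one has |w(y)| e^{ηy} ≤ 3M / (2ν |s| (Re s − η)). -/

import Mathlib

open MeasureTheory Set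

namespace Stmt4Aux

noncomputable def AA (s : ℂ) (G : ℝ → ℂ) (y : ℝ) : ℂ :=
  ∫ τ in (0:ℝ)..y, G τ * Complex.exp (s * τ)

noncomputable def BB (s : ℂ) (G : ℝ → ℂ) (y : ℝ) : ℂ :=
  ∫ τ in Ioi y, G τ * Complex.exp (-s * τ)

noncomputable def FF (s : ℂ) (G : ℝ → ℂ) (y : ℝ) : ℂ :=
  Complex.exp (-s * y) * (AA s G y + BB s G 0) + Complex.exp (s * y) * BB s G y

noncomputable def FF1 (s : ℂ) (G : ℝ → ℂ) (y : ℝ) : ℂ :=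
  -s * Complex.exp (-s * y) * (AA s G y + BB s G 0) + s * Complex.exp (s * y) * BB s G y

variable {s : ℂ} {G : ℝ → ℂ} {M : ℝ}

lemma cont_pos (hG : Continuous G) : Continuous fun τ : ℝ => G τ * Complex.exp (s * τ) :=
  hG.mul (Complex.continuous_exp.comp (by fun_prop))

lemma cont_neg (hG : Continuous G) : Continuous fun τ : ℝ => G τ * Complex.exp (-s * τ) :=
  hG.mul (Complex.continuous_exp.comp (by fun_prop))

lemma integrableOn_neg (hσ : 0 < s.re) (hG : Continuous G) (hGb : ∀ τ, ‖G τ‖ ≤ M) (y : ℝ) :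
    IntegrableOn (fun τ : ℝ => G τ * Complex.exp (-s * τ)) (Ioi y) := by
  apply Integrable.mono' ((exp_neg_integrableOn_Ioi y hσ).const_mul M)
    ((cont_neg hG).aestronglyMeasurable.restrict)
  filter_upwards with τ
  rw [norm_mul, Complex.norm_exp]
  have : (-s * (τ:ℂ)).re = -(s.re * τ) := by simp
  rw [this]
  calc ‖G τ‖ * Real.exp (-(s.re * τ)) ≤ M * Real.exp (-(s.re * τ)) :=
        mul_le_mul_of_nonneg_right (hGb τ) (Real.exp_nonneg _)
    _ = M * Real.exp (-s.re * τ) := by rw [neg_mul]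

lemma BB_eq (hσ : 0 < s.re) (hG : Continuous G) (hGb : ∀ τ, ‖G τ‖ ≤ M) (y : ℝ) :
    BB s G y = BB s G 0 - ∫ τ in (0:ℝ)..y, G τ * Complex.exp (-s * τ) := by
  rcases le_or_gt 0 y with h | h
  · rw [intervalIntegral.integral_of_le h, eq_sub_iff_add_eq, add_comm, BB, BB,
      ← setIntegral_union (Ioc_disjoint_Ioi le_rfl) measurableSet_Ioi
        ((integrableOn_neg hσ hG hGb 0).mono_set Ioc_subset_Ioi_self)
        (integrableOn_neg hσ hG hGb y), Ioc_union_Ioi_eq_Ioi h]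
  · rw [intervalIntegral.integral_symm, intervalIntegral.integral_of_le h.le, sub_neg_eq_add,
      BB, BB, add_comm,
      ← setIntegral_union (Ioc_disjoint_Ioi le_rfl) measurableSet_Ioi
        ((integrableOn_neg hσ hG hGb y).mono_set Ioc_subset_Ioi_self)
        (integrableOn_neg hσ hG hGb 0), Ioc_union_Ioi_eq_Ioi h.le]

lemma AA_hasDeriv (hG : Continuous G) (y : ℝ) :
    HasDerivAt (AA s G) (G y * Complex.exp (s * y)) y := by
  exact intervalIntegral.integral_hasDerivAt_right
    ((cont_pos hG).intervalIntegrable _ _)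
    ((cont_pos hG).aestronglyMeasurable.stronglyMeasurableAtFilter)
    (cont_pos hG).continuousAt

lemma BB_hasDeriv (hσ : 0 < s.re) (hG : Continuous G) (hGb : ∀ τ, ‖G τ‖ ≤ M) (y : ℝ) :
    HasDerivAt (BB s G) (-(G y * Complex.exp (-s * y))) y := by
  have : BB s G = fun y => BB s G 0 - ∫ τ in (0:ℝ)..y, G τ * Complex.exp (-s * τ) :=
    funext (BB_eq hσ hG hGb)
  rw [this]
  exact (intervalIntegral.integral_hasDerivAt_right
    ((cont_neg hG).intervalIntegrable _ _)
    ((cont_neg hG).aestronglyMeasurable.stronglyMeasurableAtFilter)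
    (cont_neg hG).continuousAt).const_sub _

lemma exp_hasDeriv (c : ℂ) (y : ℝ) :
    HasDerivAt (fun y : ℝ => Complex.exp (c * y)) (c * Complex.exp (c * y)) y := by
  have := (Complex.hasDerivAt_exp (c * y)).comp y
    ((hasDerivAt_id y).ofReal_comp.const_mul c)
  simpa [mul_comm, Function.comp_def] using this


lemma exp_cancel (c : ℂ) (y : ℝ) : Complex.exp (-c * y) * Complex.exp (c * y) = 1 := by
  rw [← Complex.exp_add]; ring_nf; exact Complex.exp_zero


lemma FF_hasDeriv (hσ : 0 < s.re) (hG : Continuous G) (hGb : ∀ τ, ‖G τ‖ ≤ M) (y : ℝ) :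
    HasDerivAt (FF s G) (FF1 s G y) y := by
  have h1 : HasDerivAt (fun y : ℝ => Complex.exp (-s * y) * (AA s G y + BB s G 0))
      (-s * Complex.exp (-s * y) * (AA s G y + BB s G 0)
        + Complex.exp (-s * y) * (G y * Complex.exp (s * y))) y :=
    (exp_hasDeriv (-s) y).mul ((AA_hasDeriv hG y).add_const _)
  have h2 : HasDerivAt (fun y : ℝ => Complex.exp (s * y) * BB s G y)
      (s * Complex.exp (s * y) * BB s G y
        + Complex.exp (s * y) * -(G y * Complex.exp (-s * y))) y :=
    (exp_hasDeriv s y).mul (BB_hasDeriv hσ hG hGb y)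
  refine (h1.add h2).congr_deriv (Eq.symm ?_)
  have e1 : Complex.exp (-s * (y:ℝ)) * (G y * Complex.exp (s * (y:ℝ))) = G y := by
    rw [mul_comm (G y), ← mul_assoc, exp_cancel, one_mul]
  have e2 : Complex.exp (s * (y:ℝ)) * -(G y * Complex.exp (-s * (y:ℝ))) = -G y := by
    rw [mul_neg, neg_inj, mul_comm (G y), ← mul_assoc, mul_comm (Complex.exp (s * (y:ℝ))),
      exp_cancel, one_mul]
  rw [FF1]
  linear_combination -e1 - e2


lemma FF1_hasDeriv (hσ : 0 < s.re) (hG : Continuous G) (hGb : ∀ τ, ‖G τ‖ ≤ M) (y : ℝ) :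
    HasDerivAt (FF1 s G) (s ^ 2 * FF s G y - 2 * s * G y) y := by
  have hfn : FF1 s G = fun y : ℝ =>
      -s * (Complex.exp (-s * y) * (AA s G y + BB s G 0)) + s * (Complex.exp (s * y) * BB s G y) := by
    funext y; rw [FF1]; ring
  have h1 : HasDerivAt (fun y : ℝ => Complex.exp (-s * y) * (AA s G y + BB s G 0))
      (-s * Complex.exp (-s * y) * (AA s G y + BB s G 0)
        + Complex.exp (-s * y) * (G y * Complex.exp (s * y))) y :=
    (exp_hasDeriv (-s) y).mul ((AA_hasDeriv hG y).add_const _)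
  have h2 : HasDerivAt (fun y : ℝ => Complex.exp (s * y) * BB s G y)
      (s * Complex.exp (s * y) * BB s G y
        + Complex.exp (s * y) * -(G y * Complex.exp (-s * y))) y :=
    (exp_hasDeriv s y).mul (BB_hasDeriv hσ hG hGb y)
  rw [hfn]
  refine ((h1.const_mul (-s)).add (h2.const_mul s)).congr_deriv (Eq.symm ?_)
  have e1 : Complex.exp (-s * (y:ℝ)) * (G y * Complex.exp (s * (y:ℝ))) = G y := by
    rw [mul_comm (G y), ← mul_assoc, exp_cancel, one_mul]
  have e2 : Complex.exp (s * (y:ℝ)) * -(G y * Complex.exp (-s * (y:ℝ))) = -G y := by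
    rw [mul_neg, neg_inj, mul_comm (G y), ← mul_assoc, mul_comm (Complex.exp (s * (y:ℝ))),
      exp_cancel, one_mul]
  rw [FF]
  linear_combination s * e1 - s * e2

lemma FF_contDiff (hσ : 0 < s.re) (hG : Continuous G) (hGb : ∀ τ, ‖G τ‖ ≤ M) :
    ContDiff ℝ 2 (FF s G) := by
  have dF : deriv (FF s G) = FF1 s G := funext fun y => (FF_hasDeriv hσ hG hGb y).deriv
  have dF1 : deriv (FF1 s G) = fun y => s ^ 2 * FF s G y - 2 * s * G y :=
    funext fun y => (FF1_hasDeriv hσ hG hGb y).deriv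
  have hdiffF : Differentiable ℝ (FF s G) := fun y => (FF_hasDeriv hσ hG hGb y).differentiableAt
  have hdiffF1 : Differentiable ℝ (FF1 s G) := fun y => (FF1_hasDeriv hσ hG hGb y).differentiableAt
  rw [show (2 : WithTop ℕ∞) = 1 + 1 by rfl, contDiff_succ_iff_deriv]
  refine ⟨hdiffF, by simp, ?_⟩
  rw [dF, contDiff_one_iff_deriv, dF1]
  exact ⟨hdiffF1, (continuous_const.mul hdiffF.continuous).sub (continuous_const.mul hG)⟩

end Stmt4Aux


open MeasureTheory Set Stmt4Aux

theorem stmt_4 (ν η M : ℝ) (hν : 0 < ν) (hη : 0 < η) (hM : 0 ≤ M)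
    (s : ℂ) (hs : η < s.re)
    (g : ℝ → ℂ) (hg_cont : ContinuousOn g (Ici 0))
    (hg : ∀ τ ∈ Ici (0:ℝ), ‖g τ‖ ≤ M * Real.exp (-η * τ))
    (w : ℝ → ℂ)
    (hw : ∀ y : ℝ, w y =
      -(1 / (2 * ν * s)) * (∫ τ in Ioi (0:ℝ), g τ * Complex.exp (-s * (|τ - y| : ℝ)))
      - (1 / (2 * ν * s)) * ∫ τ in Ioi (0:ℝ), g τ * Complex.exp (-s * ((τ : ℂ) + (y : ℂ)))) :
    ContDiffOn ℝ 2 w (Ici 0) ∧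
    (∀ y ∈ Ici (0:ℝ),
      (ν : ℂ) * (derivWithin (derivWithin w (Ici 0)) (Ici 0) y - s ^ 2 * w y) = g y) ∧
    (∀ y ∈ Ici (0:ℝ),
      ‖w y‖ * Real.exp (η * y) ≤
        3 * M / (2 * ν * ‖s‖ * (s.re - η))) := by
  have hσ : 0 < s.re := hη.trans hs
  have hsne : s ≠ 0 := fun h => by rw [h] at hσ; exact lt_irrefl 0 (by simpa using hσ)
  have hνne : (ν:ℂ) ≠ 0 := Complex.ofReal_ne_zero.mpr hν.ne'
  set c : ℂ := -(1 / (2 * ν * s)) with hc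
  set G : ℝ → ℂ := fun τ => g (max τ 0) with hGdef
  have hGcont : Continuous G :=
    hg_cont.comp_continuous (continuous_id.max continuous_const) fun x => mem_Ici.mpr (le_max_right _ _)
  have hGg : ∀ τ : ℝ, 0 ≤ τ → G τ = g τ := fun τ hτ => by
    simp only [hGdef]; rw [max_eq_left hτ]
  have hGbound : ∀ τ, ‖G τ‖ ≤ M * Real.exp (-η * max τ 0) := fun τ => hg _ (mem_Ici.mpr (le_max_right _ _))
  have hGb : ∀ τ, ‖G τ‖ ≤ M := fun τ => (hGbound τ).trans <| by
    have h1 : -η * max τ 0 ≤ 0 :=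
      mul_nonpos_of_nonpos_of_nonneg (neg_nonpos.mpr hη.le) (le_max_right τ 0)
    calc M * Real.exp (-η * max τ 0) ≤ M * 1 :=
          mul_le_mul_of_nonneg_left (Real.exp_le_one_iff.mpr h1) hM
      _ = M := mul_one M
  -- representation
  have hwF : ∀ y : ℝ, 0 ≤ y → w y = c * FF s G y := by
    intro y hy
    have hI2 : (∫ τ in Ioi (0:ℝ), g τ * Complex.exp (-s * ((τ : ℂ) + (y : ℂ))))
        = Complex.exp (-s * y) * BB s G 0 := by
      rw [show Complex.exp (-s * y) * BB s G 0
          = ∫ τ in Ioi (0:ℝ), Complex.exp (-s * y) * (G τ * Complex.exp (-s * τ)) from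
        (integral_const_mul _ _).symm]
      apply setIntegral_congr_fun measurableSet_Ioi
      intro τ hτ
      simp only
      rw [hGg τ (le_of_lt hτ),
        show -s * ((τ : ℂ) + (y : ℂ)) = -s * (y:ℝ) + -s * (τ:ℝ) by push_cast; ring,
        Complex.exp_add]
      ring
    have hI1 : (∫ τ in Ioi (0:ℝ), g τ * Complex.exp (-s * (|τ - y| : ℝ)))
        = Complex.exp (-s * y) * AA s G y + Complex.exp (s * y) * BB s G y := by
      have hcg : EqOn (fun τ : ℝ => g τ * Complex.exp (-s * (|τ - y| : ℝ)))
          (fun τ : ℝ => G τ * Complex.exp (-s * (|τ - y| : ℝ))) (Ioi 0) := fun τ hτ => by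
        simp only; rw [hGg τ (le_of_lt hτ)]
      rw [setIntegral_congr_fun measurableSet_Ioi hcg]
      have hsplit : Ioi (0:ℝ) = Ioc 0 y ∪ Ioi y := (Ioc_union_Ioi_eq_Ioi hy).symm
      have int2 : IntegrableOn (fun τ : ℝ => G τ * Complex.exp (-s * (|τ - y| : ℝ)))
          (Ioi y) := by
        apply IntegrableOn.congr_fun
          (((integrableOn_neg hσ hGcont hGb y)).const_mul (Complex.exp (s * y)))
          _ measurableSet_Ioi
        intro τ hτ
        simp only
        rw [abs_of_nonneg (by simp at hτ; linarith : (0:ℝ) ≤ τ - y),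
          show -s * ((τ - y : ℝ) : ℂ) = s * (y:ℝ) + -s * (τ:ℝ) by push_cast; ring,
          Complex.exp_add]
        ring
      have int1 : IntegrableOn (fun τ : ℝ => G τ * Complex.exp (-s * (|τ - y| : ℝ)))
          (Ioc 0 y) := by
        apply Continuous.integrableOn_Ioc
        exact hGcont.mul (Complex.continuous_exp.comp (by fun_prop))
      rw [hsplit, setIntegral_union (Ioc_disjoint_Ioi le_rfl) measurableSet_Ioi int1 int2]
      congr 1
      · rw [show Complex.exp (-s * y) * AA s G y
            = ∫ τ in Ioc (0:ℝ) y, Complex.exp (-s * y) * (G τ * Complex.exp (s * τ)) by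
          rw [integral_const_mul, AA, intervalIntegral.integral_of_le hy]]
        apply setIntegral_congr_fun measurableSet_Ioc
        intro τ hτ
        simp only
        rw [abs_of_nonpos (by simp at hτ; linarith : τ - y ≤ (0:ℝ)),
          show -s * ((-(τ - y) : ℝ) : ℂ) = -s * (y:ℝ) + s * (τ:ℝ) by push_cast; ring,
          Complex.exp_add]
        ring
      · rw [show Complex.exp (s * y) * BB s G y
            = ∫ τ in Ioi y, Complex.exp (s * y) * (G τ * Complex.exp (-s * τ)) from
          (integral_const_mul _ _).symm]
        apply setIntegral_congr_fun measurableSet_Ioi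
        intro τ hτ
        simp only
        rw [abs_of_nonneg (by simp at hτ; linarith : (0:ℝ) ≤ τ - y),
          show -s * ((τ - y : ℝ) : ℂ) = s * (y:ℝ) + -s * (τ:ℝ) by push_cast; ring,
          Complex.exp_add]
        ring
    rw [hw y, hI1, hI2, FF, hc]
    ring
  have hFd := FF_hasDeriv hσ hGcont hGb
  have hF1d := FF1_hasDeriv hσ hGcont hGb
  have hwt : ContDiff ℝ 2 (fun y => c * FF s G y) :=
    contDiff_const.mul (FF_contDiff hσ hGcont hGb)
  have hEq : EqOn w (fun y => c * FF s G y) (Ici 0) := fun y hy => hwF y hy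
  have goal1 : ContDiffOn ℝ 2 w (Ici 0) := hwt.contDiffOn.congr hEq
  have hd1 : ∀ y : ℝ, HasDerivAt (fun y => c * FF s G y) (c * FF1 s G y) y := fun y =>
    (hFd y).const_mul c
  have hd2 : ∀ y : ℝ, HasDerivAt (fun y => c * FF1 s G y)
      (c * (s ^ 2 * FF s G y - 2 * s * G y)) y := fun y => (hF1d y).const_mul c
  have hD1 : EqOn (derivWithin w (Ici 0)) (fun y => c * FF1 s G y) (Ici 0) := by
    intro y hy
    rw [derivWithin_congr hEq (hEq hy)]
    exact (hd1 y).hasDerivWithinAt.derivWithin (uniqueDiffOn_Ici 0 y hy)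
  have hD2 : ∀ y ∈ Ici (0:ℝ), derivWithin (derivWithin w (Ici 0)) (Ici 0) y
      = c * (s ^ 2 * FF s G y - 2 * s * G y) := by
    intro y hy
    rw [derivWithin_congr hD1 (hD1 hy)]
    exact (hd2 y).hasDerivWithinAt.derivWithin (uniqueDiffOn_Ici 0 y hy)
  refine ⟨goal1, fun y hy => ?_, fun y hy => ?_⟩
  · rw [hD2 y hy, hwF y hy, ← hGg y hy, hc]
    field_simp
    ring
  · -- the bound
    have hy' : (0:ℝ) ≤ y := hy
    set σ : ℝ := s.re with hσdef
    have hση : 0 < σ - η := by simp only [hσdef]; linarith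
    have hspe : 0 < σ + η := by simp only [hσdef]; linarith
    -- bound on AA
    have hAb : ‖AA s G y‖ ≤ M * Real.exp ((σ - η) * y) / (σ - η) := by
      have hint : IntervalIntegrable (fun t : ℝ => M * Real.exp ((σ - η) * t)) volume 0 y :=
        (continuous_const.mul (Real.continuous_exp.comp (by fun_prop))).intervalIntegrable _ _
      have hae : ∀ᵐ t ∂volume.restrict (Set.uIoc 0 y),
          ‖G t * Complex.exp (s * t)‖ ≤ M * Real.exp ((σ - η) * t) := by
        rw [Set.uIoc_of_le hy']
        refine (ae_restrict_iff' measurableSet_Ioc).mpr (ae_of_all _ fun t ht => ?_)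
        rw [norm_mul, Complex.norm_exp]
        have h1 : (s * (t:ℂ)).re = σ * t := by simp [hσdef]
        rw [h1]
        have h2 : ‖G t‖ ≤ M * Real.exp (-η * t) := by
          have := hGbound t; rwa [max_eq_left ht.1.le] at this
        calc ‖G t‖ * Real.exp (σ * t) ≤ M * Real.exp (-η * t) * Real.exp (σ * t) :=
              mul_le_mul_of_nonneg_right h2 (Real.exp_nonneg _)
          _ = M * Real.exp ((σ - η) * t) := by rw [mul_assoc, ← Real.exp_add]; ring_nf
      have := intervalIntegral.norm_integral_le_of_norm_le hy'
        ((ae_restrict_iff' measurableSet_Ioc).mp (by rwa [Set.uIoc_of_le hy'] at hae)) hint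
      rw [AA] at *
      refine (this.trans ?_)
      rw [intervalIntegral.integral_const_mul]
      have hval : (∫ t in (0:ℝ)..y, Real.exp ((σ - η) * t))
          = (Real.exp ((σ - η) * y) - 1) / (σ - η) := by
        rw [intervalIntegral.integral_comp_mul_left (fun x => Real.exp x) hση.ne']
        rw [mul_zero, integral_exp, Real.exp_zero, smul_eq_mul]
        ring
      have h1exp : (1:ℝ) ≤ Real.exp ((σ - η) * y) := Real.one_le_exp (by positivity)
      rw [hval,
        mul_div_assoc]
      gcongr
      linarith
    have hBb : ∀ z : ℝ, 0 ≤ z → ‖BB s G z‖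
        ≤ M * Real.exp (-((σ + η) * z)) / (σ + η) := by
      intro z hz
      have hint : IntegrableOn (fun τ : ℝ => M * Real.exp (-((σ + η) * τ))) (Ioi z) := by
        have h0 := (exp_neg_integrableOn_Ioi z hspe).const_mul M
        have he : (fun τ : ℝ => M * Real.exp (-((σ + η) * τ)))
            = fun x : ℝ => M * Real.exp (-(σ + η) * x) := by
          funext x; rw [neg_mul]
        rw [he]; exact h0
      have hae : ∀ᵐ τ ∂volume.restrict (Ioi z),
          ‖G τ * Complex.exp (-s * τ)‖ ≤ M * Real.exp (-((σ + η) * τ)) := by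
        refine (ae_restrict_iff' measurableSet_Ioi).mpr (ae_of_all _ fun τ hτ => ?_)
        have hτ0 : (0:ℝ) ≤ τ := le_trans hz (le_of_lt hτ)
        rw [norm_mul, Complex.norm_exp]
        have h1 : (-s * (τ:ℂ)).re = -(σ * τ) := by simp [hσdef]
        rw [h1]
        have h2 : ‖G τ‖ ≤ M * Real.exp (-η * τ) := by
          have := hGbound τ; rwa [max_eq_left hτ0] at this
        calc ‖G τ‖ * Real.exp (-(σ * τ)) ≤ M * Real.exp (-η * τ) * Real.exp (-(σ * τ)) :=
              mul_le_mul_of_nonneg_right h2 (Real.exp_nonneg _)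
          _ = M * Real.exp (-((σ + η) * τ)) := by rw [mul_assoc, ← Real.exp_add]; ring_nf
      have hle := norm_integral_le_of_norm_le hint hae
      rw [BB]
      refine hle.trans (le_of_eq ?_)
      rw [integral_const_mul]
      have hval : (∫ τ in Ioi z, Real.exp (-((σ + η) * τ)))
          = Real.exp (-((σ + η) * z)) / (σ + η) := by
        rw [integral_comp_mul_left_Ioi (fun x => Real.exp (-x)) z hspe,
          integral_exp_neg_Ioi, smul_eq_mul]
        ring
      rw [hval]
      ring
    have hE1 : ‖Complex.exp (-s * y)‖ = Real.exp (-(σ * y)) := by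
      rw [Complex.norm_exp]; congr 1; simp [hσdef]
    have hE2 : ‖Complex.exp (s * y)‖ = Real.exp (σ * y) := by
      rw [Complex.norm_exp]; congr 1; simp [hσdef]
    have t2 : ‖BB s G 0‖ ≤ M / (σ + η) := by
      have := hBb 0 le_rfl; simpa using this
    have t3 := hBb y hy'
    have E1 : Real.exp (-(σ * y)) * Real.exp ((σ - η) * y) = Real.exp (-η * y) := by
      rw [← Real.exp_add]; ring_nf
    have E2 : Real.exp (σ * y) * Real.exp (-((σ + η) * y)) = Real.exp (-η * y) := by
      rw [← Real.exp_add]; ring_nf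
    have E3 : Real.exp (-(σ * y)) ≤ Real.exp (-η * y) :=
      Real.exp_le_exp.mpr (by nlinarith)
    have hF : ‖FF s G y‖ ≤ 3 * M * Real.exp (-η * y) / (σ - η) := by
      rw [FF]
      have i1 : Real.exp (-(σ * y)) * (M * Real.exp ((σ - η) * y) / (σ - η))
          = M * Real.exp (-η * y) / (σ - η) := by rw [← E1]; ring
      have i2 : Real.exp (-(σ * y)) * (M / (σ + η))
          ≤ M * Real.exp (-η * y) / (σ - η) := by
        rw [mul_div_assoc']
        refine div_le_div₀ (by positivity) ?_ hση (by linarith)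
        calc Real.exp (-(σ * y)) * M ≤ Real.exp (-η * y) * M :=
              mul_le_mul_of_nonneg_right E3 hM
          _ = M * Real.exp (-η * y) := mul_comm _ _
      have i3 : Real.exp (σ * y) * (M * Real.exp (-((σ + η) * y)) / (σ + η))
          ≤ M * Real.exp (-η * y) / (σ - η) := by
        rw [mul_div_assoc']
        refine div_le_div₀ (by positivity) (le_of_eq ?_) hση (by linarith)
        rw [← E2]; ring
      calc ‖Complex.exp (-s * y) * (AA s G y + BB s G 0)
              + Complex.exp (s * y) * BB s G y‖
          ≤ ‖Complex.exp (-s * y) * (AA s G y + BB s G 0)‖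
            + ‖Complex.exp (s * y) * BB s G y‖ := norm_add_le _ _
        _ = Real.exp (-(σ * y)) * ‖AA s G y + BB s G 0‖
            + Real.exp (σ * y) * ‖BB s G y‖ := by
              rw [norm_mul, norm_mul, hE1, hE2]
        _ ≤ Real.exp (-(σ * y)) * (‖AA s G y‖ + ‖BB s G 0‖)
            + Real.exp (σ * y) * ‖BB s G y‖ := by
              gcongr
              exact norm_add_le _ _
        _ ≤ Real.exp (-(σ * y)) * (M * Real.exp ((σ - η) * y) / (σ - η) + M / (σ + η))
            + Real.exp (σ * y) * (M * Real.exp (-((σ + η) * y)) / (σ + η)) := by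
              gcongr
        _ = Real.exp (-(σ * y)) * (M * Real.exp ((σ - η) * y) / (σ - η))
            + Real.exp (-(σ * y)) * (M / (σ + η))
            + Real.exp (σ * y) * (M * Real.exp (-((σ + η) * y)) / (σ + η)) := by ring
        _ ≤ 3 * M * Real.exp (-η * y) / (σ - η) := by
              rw [i1, show (3:ℝ) * M * Real.exp (-η * y) / (σ - η)
                = M * Real.exp (-η * y) / (σ - η) + M * Real.exp (-η * y) / (σ - η)
                  + M * Real.exp (-η * y) / (σ - η) by ring]
              exact add_le_add (add_le_add le_rfl i2) i3
    have hcabs : ‖c‖ = 1 / (2 * ν * ‖s‖) := by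
      simp [hc, norm_div, norm_mul, Complex.norm_real, abs_of_pos hν]
    have hee : Real.exp (-η * y) * Real.exp (η * y) = 1 := by
      rw [← Real.exp_add]; simp
    rw [hwF y hy', norm_mul, hcabs]
    calc 1 / (2 * ν * ‖s‖) * ‖FF s G y‖ * Real.exp (η * y)
        ≤ 1 / (2 * ν * ‖s‖) * (3 * M * Real.exp (-η * y) / (σ - η))
            * Real.exp (η * y) := by
          gcongr
      _ = 3 * M / (2 * ν * ‖s‖ * (σ - η))
            * (Real.exp (-η * y) * Real.exp (η * y)) := by
          have hsabs : ‖s‖ ≠ 0 := norm_ne_zero_iff.mpr hsne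
          field_simp
      _ = 3 * M / (2 * ν * ‖s‖ * (σ - η)) := by rw [hee, mul_one]
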